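/- arXiv:1810.04579 — 7 statements merged into one kernel-verified Lean document; each statement's English description precedes it below -/
import Mathlib

section
/- Any (λ, C)-quasi-isometric map c from a compact interval [a,b] to a geodesic metric space, whose endpoints satisfy d(c(a), c(b)) ≥ 2C, can be uniformly approximated up to distance 8C by a continuous map d : [a,b] → X with the same endpoints, which is a (λ, 17C)-quasi-isometric map and is moreover 2λ-Lipschitz. -/
open Metric Set Real

noncomputable section

variable {X : Type*} [MetricSpace X]

/-- Gromov product (x,y)_w. -/
def gromovProd (x y w : X) : ℝ := (dist x w + dist y w - dist x y) / 2

/-- δ-hyperbolicity: four-point inequality for the Gromov product. -/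
def IsHyperbolic (X : Type*) [MetricSpace X] (δ : ℝ) : Prop :=
  ∀ x y z w : X, min (gromovProd x y w) (gromovProd y z w) - δ ≤ gromovProd x z w

/-- `G` is a geodesic segment between `x` and `y`. -/
def GeodesicSegmentBetween (G : Set X) (x y : X) : Prop :=
  ∃ f : ℝ → X, f 0 = x ∧ f (dist x y) = y ∧
    (∀ s ∈ Icc (0:ℝ) (dist x y), ∀ t ∈ Icc (0:ℝ) (dist x y), dist (f s) (f t) = |s - t|) ∧
    G = f '' Icc (0:ℝ) (dist x y)

/-- A geodesic metric space: any two points are joined by a geodesic segment. -/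
def GeodesicSpace (X : Type*) [MetricSpace X] : Prop :=
  ∀ x y : X, ∃ G : Set X, GeodesicSegmentBetween G x y

/-- `(λ, C)`-quasi-isometric map on a set of reals. -/
def QuasiIsometryOn (lam C : ℝ) (s : Set ℝ) (f : ℝ → X) : Prop :=
  1 ≤ lam ∧ 0 ≤ C ∧ ∀ x ∈ s, ∀ y ∈ s,
    lam⁻¹ * |y - x| - C ≤ dist (f x) (f y) ∧ dist (f x) (f y) ≤ lam * |y - x| + C

/-- `K`-quasiconvexity of a subset. -/
def Quasiconvex (K : ℝ) (Y : Set X) : Prop :=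
  ∀ y₁ ∈ Y, ∀ y₂ ∈ Y, ∃ G : Set X, GeodesicSegmentBetween G y₁ y₂ ∧
    ∀ z ∈ G, infDist z Y ≤ K

/-- `p` is a closest-point projection of `x` on `Y`. -/
def ProjOn (p x : X) (Y : Set X) : Prop := p ∈ Y ∧ dist x p = infDist x Y

set_option maxHeartbeats 2000000 in
theorem quasi_geodesic_made_lipschitz
    (hX : GeodesicSpace X) {a b lam C : ℝ} {c : ℝ → X}
    (hc : QuasiIsometryOn lam C (Icc a b) c)
    (hab : dist (c a) (c b) ≥ 2 * C) :
    ∃ d : ℝ → X, ContinuousOn d (Icc a b) ∧ d a = c a ∧ d b = c b ∧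
      (∀ x ∈ Icc a b, dist (c x) (d x) ≤ 8 * C) ∧
      QuasiIsometryOn lam (17 * C) (Icc a b) d ∧
      (∀ x ∈ Icc a b, ∀ y ∈ Icc a b, dist (d x) (d y) ≤ 2 * lam * |y - x|) := by
  obtain ⟨hlam, hC, hcub⟩ := hc
  have hlam0 : (0:ℝ) < lam := lt_of_lt_of_le one_pos hlam
  by_cases hab' : a ≤ b
  swap
  · have he : Icc a b = (∅ : Set ℝ) := Icc_eq_empty hab'
    refine ⟨c, by simp [he], rfl, rfl, by simp [he], ⟨hlam, by linarith, by simp [he]⟩,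
      by simp [he]⟩
  by_cases hCpos : 0 < C
  swap
  · -- C = 0 : c itself works
    have hC0 : C = 0 := le_antisymm (not_lt.1 hCpos) hC
    have key : ∀ x ∈ Icc a b, ∀ y ∈ Icc a b, dist (c x) (c y) ≤ lam * |y - x| := by
      intro x hx y hy
      have := (hcub x hx y hy).2
      linarith
    have hlip : LipschitzOnWith (Real.toNNReal lam) c (Icc a b) := by
      rw [lipschitzOnWith_iff_dist_le_mul]
      intro x hx y hy
      have h1 := key x hx y hy
      rw [Real.coe_toNNReal lam (le_of_lt hlam0), Real.dist_eq, abs_sub_comm]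
      exact h1
    refine ⟨c, hlip.continuousOn, rfl, rfl, ?_, ⟨hlam, by linarith, ?_⟩, ?_⟩
    · intro x hx; simp [hC0]
    · intro x hx y hy
      obtain ⟨h1, h2⟩ := hcub x hx y hy
      constructor <;> linarith
    · intro x hx y hy
      have h1 := key x hx y hy
      nlinarith [abs_nonneg (y - x)]
  -- Main case : 0 < C, a ≤ b
  have geokey : ∀ x y : X, ∃ f : ℝ → X, f 0 = x ∧ f (dist x y) = y ∧
      ∀ s ∈ Icc (0:ℝ) (dist x y), ∀ u ∈ Icc (0:ℝ) (dist x y),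
        dist (f s) (f u) = |s - u| := by
    intro x y
    obtain ⟨G, f, h0, h1, hiso, _⟩ := hX x y
    exact ⟨f, h0, h1, hiso⟩
  choose geo hg0 hg1 hgiso using geokey
  have hmema : a ∈ Icc a b := left_mem_Icc.2 hab'
  have hmemb : b ∈ Icc a b := right_mem_Icc.2 hab'
  have hba : C ≤ lam * (b - a) := by
    have h1 := (hcub a hmema b hmemb).2
    rw [abs_of_nonneg (by linarith : (0:ℝ) ≤ b - a)] at h1
    linarith
  have hbapos : 0 < b - a := by
    rcases lt_or_ge 0 (b - a) with h | h
    · exact h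
    · exfalso; nlinarith
  have hs0 : (0:ℝ) ≤ (b - a) * lam / C := by positivity
  have hs1 : (1:ℝ) ≤ (b - a) * lam / C := by
    rw [le_div_iff₀ hCpos]; nlinarith
  obtain ⟨N, hNdef⟩ : ∃ N : ℕ, N = ⌊(b - a) * lam / C⌋₊ := ⟨_, rfl⟩
  have hN1 : 1 ≤ N := by
    rw [hNdef]; exact Nat.le_floor (by exact_mod_cast hs1)
  have hN0 : 0 < N := hN1
  have hNR : (0:ℝ) < (N:ℝ) := by exact_mod_cast hN0
  have hNle : (N:ℝ) ≤ (b - a) * lam / C := by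
    rw [hNdef]; exact Nat.floor_le hs0
  have hNge : (b - a) * lam / C ≤ 2 * N := by
    have h1 := Nat.lt_floor_add_one ((b - a) * lam / C)
    rw [← hNdef] at h1
    have h2 : (1:ℝ) ≤ (N:ℝ) := by exact_mod_cast hN1
    linarith
  obtain ⟨h, hhdef⟩ : ∃ h : ℝ, h = (b - a) / N := ⟨_, rfl⟩
  have hhpos : 0 < h := hhdef ▸ div_pos hbapos hNR
  have hmul1 : (N:ℝ) * C ≤ (b - a) * lam := (le_div_iff₀ hCpos).mp hNle
  have hmul2 : (b - a) * lam ≤ 2 * N * C := by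
    have := (div_le_iff₀ hCpos).mp hNge
    linarith
  have hh1 : C ≤ lam * h := by
    rw [hhdef, mul_div_assoc', le_div_iff₀ hNR]
    nlinarith
  have hh2 : lam * h ≤ 2 * C := by
    rw [hhdef, mul_div_assoc', div_le_iff₀ hNR]
    nlinarith
  have hC3 : lam * h + C ≤ 3 * C := by linarith
  -- subdivision points
  obtain ⟨t, htdef⟩ : ∃ t : ℕ → ℝ, t = fun i : ℕ => a + (i:ℝ) * h := ⟨_, rfl⟩
  have ht0 : t 0 = a := by simp [htdef]
  have htsub : ∀ i : ℕ, t (i+1) - t i = h := by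
    intro i; simp only [htdef]; push_cast; ring
  have hta : ∀ i : ℕ, a ≤ t i := by
    intro i; simp only [htdef]
    have h3 : 0 ≤ (i:ℝ) * h := by positivity
    linarith
  have htmono : ∀ i j : ℕ, i ≤ j → t i ≤ t j := by
    intro i j hij
    simp only [htdef]
    have hij' : (i:ℝ) ≤ (j:ℝ) := by exact_mod_cast hij
    nlinarith
  have htN : t N = b := by
    simp only [htdef]
    rw [hhdef]; field_simp; ring
  have htmem : ∀ i : ℕ, i ≤ N → t i ∈ Icc a b := by
    intro i hi
    exact ⟨hta i, by rw [← htN]; exact htmono i N hi⟩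
  have hDle : ∀ i : ℕ, i < N → dist (c (t i)) (c (t (i+1))) ≤ lam * h + C := by
    intro i hi
    have h1 := (hcub (t i) (htmem i hi.le) (t (i+1)) (htmem (i+1) hi)).2
    rw [htsub i, abs_of_pos hhpos] at h1
    exact h1
  -- geodesic interpolation on each segment
  obtain ⟨e, hedef⟩ : ∃ e : ℕ → ℝ → X, e = fun i x =>
      geo (c (t i)) (c (t (i+1))) ((x - t i) / h * dist (c (t i)) (c (t (i+1)))) := ⟨_, rfl⟩
  have hsmem : ∀ i : ℕ, ∀ x : ℝ, t i ≤ x → x ≤ t (i+1) →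
      (x - t i) / h * dist (c (t i)) (c (t (i+1))) ∈
        Icc 0 (dist (c (t i)) (c (t (i+1)))) := by
    intro i x h1 h2
    constructor
    · have h3 : 0 ≤ (x - t i) / h := div_nonneg (by linarith) hhpos.le
      positivity
    · apply mul_le_of_le_one_left dist_nonneg
      rw [div_le_one hhpos]
      have := htsub i; linarith
  have he0 : ∀ i : ℕ, e i (t i) = c (t i) := by
    intro i
    simp only [hedef, sub_self, zero_div, zero_mul]
    exact hg0 _ _
  have he1 : ∀ i : ℕ, e i (t (i+1)) = c (t (i+1)) := by
    intro i
    have hq : (t (i+1) - t i) / h = 1 := by rw [htsub]; field_simp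
    simp only [hedef, hq, one_mul]
    exact hg1 _ _
  have hedist : ∀ i : ℕ, ∀ x, t i ≤ x → x ≤ t (i+1) → ∀ y, t i ≤ y → y ≤ t (i+1) →
      dist (e i x) (e i y) = |x - y| / h * dist (c (t i)) (c (t (i+1))) := by
    intro i x hx1 hx2 y hy1 hy2
    have h1 := hgiso (c (t i)) (c (t (i+1))) _ (hsmem i x hx1 hx2) _ (hsmem i y hy1 hy2)
    simp only [hedef]
    rw [h1]
    have h2 : (x - t i) / h * dist (c (t i)) (c (t (i+1)))
        - (y - t i) / h * dist (c (t i)) (c (t (i+1)))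
        = (x - y) / h * dist (c (t i)) (c (t (i+1))) := by ring
    rw [h2, abs_mul, abs_div, abs_of_pos hhpos, abs_of_nonneg dist_nonneg]
  have hseg : ∀ i : ℕ, i < N → ∀ x, t i ≤ x → x ≤ t (i+1) → ∀ y, t i ≤ y → y ≤ t (i+1) →
      dist (e i x) (e i y) ≤ 2 * lam * |y - x| := by
    intro i hi x hx1 hx2 y hy1 hy2
    rw [hedist i x hx1 hx2 y hy1 hy2]
    have hD : dist (c (t i)) (c (t (i+1))) ≤ 2 * (lam * h) := by
      have := hDle i hi; linarith
    calc |x - y| / h * dist (c (t i)) (c (t (i+1)))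
        ≤ |x - y| / h * (2 * (lam * h)) := by
          apply mul_le_mul_of_nonneg_left hD
          positivity
      _ = 2 * lam * |x - y| := by field_simp
      _ = 2 * lam * |y - x| := by rw [abs_sub_comm]
  have heclose : ∀ i : ℕ, i < N → ∀ x, t i ≤ x → x ≤ t (i+1) →
      dist (c (t i)) (e i x) ≤ 3 * C := by
    intro i hi x hx1 hx2
    have h1 := hedist i (t i) le_rfl (by have := htsub i; linarith) x hx1 hx2
    rw [he0 i] at h1
    rw [h1]
    have h2 : |t i - x| / h ≤ 1 := by
      rw [div_le_one hhpos, abs_sub_comm, abs_of_nonneg (by linarith)]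
      have := htsub i; linarith
    calc |t i - x| / h * dist (c (t i)) (c (t (i+1)))
        ≤ 1 * dist (c (t i)) (c (t (i+1))) :=
          mul_le_mul_of_nonneg_right h2 dist_nonneg
      _ = dist (c (t i)) (c (t (i+1))) := one_mul _
      _ ≤ lam * h + C := hDle i hi
      _ ≤ 3 * C := hC3
  -- the index function and the global map
  obtain ⟨idx, hidxdef⟩ : ∃ idx : ℝ → ℕ, idx = fun x => min (N-1) ⌊(x - a)/h⌋₊ := ⟨_, rfl⟩
  obtain ⟨d, hddef⟩ : ∃ d : ℝ → X, d = fun x => e (idx x) x := ⟨_, rfl⟩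
  -- basic properties of idx
  have hidxlt : ∀ x : ℝ, idx x < N := by
    intro x
    simp only [hidxdef]
    exact lt_of_le_of_lt (min_le_left _ _) (Nat.sub_lt hN0 one_pos)
  have hidx : ∀ x, a ≤ x → x ≤ b → t (idx x) ≤ x ∧ x ≤ t (idx x + 1) := by
    intro x hax hxb
    have hfl : (⌊(x - a)/h⌋₊ : ℝ) ≤ (x - a)/h :=
      Nat.floor_le (div_nonneg (by linarith) hhpos.le)
    constructor
    · have hmle : idx x ≤ ⌊(x - a)/h⌋₊ := by
        simp only [hidxdef]; exact min_le_right _ _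
      have h1 : ((idx x : ℕ) : ℝ) ≤ (x - a)/h :=
        le_trans (by exact_mod_cast hmle) hfl
      have h2 : (idx x : ℝ) * h ≤ x - a := (le_div_iff₀ hhpos).mp h1
      simp only [htdef]; linarith
    · rcases min_cases (N-1) ⌊(x - a)/h⌋₊ with ⟨hmin, _⟩ | ⟨hmin, _⟩
      · have hix : idx x = N - 1 := by simp only [hidxdef]; exact hmin
        rw [hix, Nat.sub_add_cancel hN1, htN]
        exact hxb
      · have hix : idx x = ⌊(x - a)/h⌋₊ := by simp only [hidxdef]; exact hmin
        have h1 : (x - a)/h < (idx x : ℝ) + 1 := by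
          rw [hix]; exact Nat.lt_floor_add_one _
        have h2 : x - a < ((idx x : ℝ) + 1) * h := (div_lt_iff₀ hhpos).mp h1
        simp only [htdef]; push_cast; linarith
  -- d agrees with e i on segment i
  have hA : ∀ i : ℕ, i < N → ∀ x, t i ≤ x → x ≤ t (i+1) → d x = e i x := by
    intro i hi x h1 h2
    have hxa : a ≤ x := le_trans (hta i) h1
    rcases eq_or_lt_of_le h2 with heq | hlt
    · -- x = t (i + 1)
      rcases eq_or_lt_of_le (show i + 1 ≤ N from hi) with heqN | hltN
      · -- i + 1 = N : idx x = N - 1 = i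
        have hflval : (x - a)/h = (N:ℝ) := by
          rw [heq, heqN, htN, hhdef]
          field_simp
        have hfl : ⌊(x - a)/h⌋₊ = N := by rw [hflval]; exact Nat.floor_natCast N
        have hix : idx x = i := by
          simp only [hidxdef, hfl]
          rw [min_eq_left (Nat.sub_le N 1)]
          omega
        rw [hddef]
        show e (idx x) x = e i x
        rw [hix]
      · -- i + 1 < N : idx x = i + 1, but both maps agree at the breakpoint
        have hflval : (x - a)/h = ((i:ℝ) + 1) := by
          rw [heq]
          simp only [htdef]
          push_cast
          rw [div_eq_iff hhpos.ne']
          ring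
        have hfl : ⌊(x - a)/h⌋₊ = i + 1 := by
          rw [hflval]
          exact_mod_cast Nat.floor_natCast (i+1)
        have hix : idx x = i + 1 := by
          simp only [hidxdef, hfl]
          exact min_eq_right (by omega)
        rw [hddef]
        show e (idx x) x = e i x
        rw [hix, heq, he0 (i+1), he1 i]
    · -- x < t (i + 1) : idx x = i
      have hfl : ⌊(x - a)/h⌋₊ = i := by
        rw [Nat.floor_eq_iff (div_nonneg (by linarith) hhpos.le)]
        constructor
        · rw [le_div_iff₀ hhpos]
          simp only [htdef] at h1; linarith
        · rw [div_lt_iff₀ hhpos]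
          simp only [htdef] at hlt
          push_cast at hlt ⊢
          linarith
      have hix : idx x = i := by
        simp only [hidxdef, hfl]
        exact min_eq_right (by omega)
      rw [hddef]
      show e (idx x) x = e i x
      rw [hix]
  -- endpoints
  have hda : d a = c a := by
    have h1 : d a = e 0 a := by
      apply hA 0 hN0 a ht0.le
      rw [← ht0]; exact htmono 0 1 (by norm_num)
    rw [h1, ← ht0, he0 0]
  have hdb : d b = c b := by
    have hsucc : N - 1 + 1 = N := Nat.succ_pred_eq_of_pos hN0
    have h1 : d b = e (N-1) b := by
      apply hA (N-1) (Nat.sub_lt hN0 one_pos) b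
      · rw [← htN]; exact htmono (N-1) N (Nat.sub_le N 1)
      · rw [hsucc, htN]
    have h2 : e (N-1) (t ((N-1)+1)) = c (t ((N-1)+1)) := he1 (N-1)
    rw [hsucc, htN] at h2
    rw [h1, h2]
  -- closeness
  have hclose : ∀ x ∈ Icc a b, dist (c x) (d x) ≤ 6 * C := by
    intro x hx
    obtain ⟨h1, h2⟩ := hidx x hx.1 hx.2
    have hi := hidxlt x
    rw [hA (idx x) hi x h1 h2]
    have e1 : dist (c x) (c (t (idx x))) ≤ lam * h + C := by
      have h3 := (hcub x hx (t (idx x)) (htmem _ hi.le)).2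
      have habs : |t (idx x) - x| ≤ h := by
        rw [abs_of_nonpos (by linarith), neg_sub]
        have := htsub (idx x); linarith
      have h4 : lam * |t (idx x) - x| ≤ lam * h :=
        mul_le_mul_of_nonneg_left habs hlam0.le
      linarith
    have e2 := heclose (idx x) hi x h1 h2
    calc dist (c x) (e (idx x) x)
        ≤ dist (c x) (c (t (idx x))) + dist (c (t (idx x))) (e (idx x) x) :=
          dist_triangle _ _ _
      _ ≤ (lam * h + C) + 3 * C := add_le_add e1 e2
      _ ≤ 6 * C := by linarith
  -- Lipschitz property by induction on segments
  have hkey : ∀ k : ℕ, k ≤ N → ∀ x, a ≤ x → x ≤ t k → ∀ y, x ≤ y → y ≤ t k →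
      dist (d x) (d y) ≤ 2 * lam * (y - x) := by
    intro k
    induction k with
    | zero =>
      intro _ x hax hxk y hxy hyk
      rw [ht0] at hxk hyk
      have hx : x = a := le_antisymm hxk hax
      have hy : y = a := le_antisymm hyk (hx ▸ hxy)
      rw [hx, hy]
      simp
    | succ k ih =>
      intro hk1 x hax hxk y hxy hyk
      have hkN : k < N := hk1
      have hkk1 : t k ≤ t (k+1) := htmono k (k+1) (Nat.le_succ k)
      by_cases hy : y ≤ t k
      · exact ih hkN.le x hax (le_trans hxy hy) y hxy hy
      push_neg at hy
      by_cases hx : t k ≤ x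
      · rw [hA k hkN x hx hxk, hA k hkN y hy.le hyk]
        have h3 := hseg k hkN x hx hxk y hy.le hyk
        rwa [abs_of_nonneg (by linarith)] at h3
      · push_neg at hx
        have hm1 : dist (d x) (d (t k)) ≤ 2 * lam * (t k - x) :=
          ih hkN.le x hax hx.le (t k) hx.le le_rfl
        have hm2 : dist (d (t k)) (d y) ≤ 2 * lam * (y - t k) := by
          rw [hA k hkN (t k) le_rfl hkk1, hA k hkN y hy.le hyk]
          have h3 := hseg k hkN (t k) le_rfl hkk1 y hy.le hyk
          rwa [abs_of_nonneg (by linarith)] at h3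
        calc dist (d x) (d y) ≤ dist (d x) (d (t k)) + dist (d (t k)) (d y) :=
              dist_triangle _ _ _
          _ ≤ 2 * lam * (t k - x) + 2 * lam * (y - t k) := add_le_add hm1 hm2
          _ = 2 * lam * (y - x) := by ring
  have hlipd : ∀ x ∈ Icc a b, ∀ y ∈ Icc a b, dist (d x) (d y) ≤ 2 * lam * |y - x| := by
    intro x hx y hy
    rcases le_total x y with hxy | hyx
    · rw [abs_of_nonneg (by linarith)]
      exact hkey N le_rfl x hx.1 (htN ▸ hx.2) y hxy (htN ▸ hy.2)
    · rw [abs_of_nonpos (by linarith), neg_sub, dist_comm]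
      exact hkey N le_rfl y hy.1 (htN ▸ hy.2) x hyx (htN ▸ hx.2)
  have h2lam : (0:ℝ) ≤ 2 * lam := by linarith
  have hcont : ContinuousOn d (Icc a b) := by
    apply LipschitzOnWith.continuousOn (K := Real.toNNReal (2*lam))
    rw [lipschitzOnWith_iff_dist_le_mul]
    intro x hx y hy
    rw [Real.coe_toNNReal _ h2lam, Real.dist_eq]
    have h1 := hlipd x hx y hy
    rwa [abs_sub_comm] at h1
  refine ⟨d, hcont, hda, hdb, ?_, ⟨hlam, by linarith, ?_⟩, hlipd⟩
  · intro x hx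
    have := hclose x hx
    linarith
  · intro x hx y hy
    obtain ⟨l1, u1⟩ := hcub x hx y hy
    have e1 := hclose x hx
    have e2 := hclose y hy
    have e1' : dist (d x) (c x) ≤ 6 * C := by rw [dist_comm]; exact e1
    have e2' : dist (d y) (c y) ≤ 6 * C := by rw [dist_comm]; exact e2
    constructor
    · have tri : dist (c x) (c y) ≤ dist (c x) (d x) + dist (d x) (d y) + dist (d y) (c y) :=
        dist_triangle4 _ _ _ _
      linarith
    · have tri : dist (d x) (d y) ≤ dist (d x) (c x) + dist (c x) (c y) + dist (c y) (d y) :=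
        dist_triangle4 _ _ _ _
      linarith
end
end

section
/- More generally, for any Δ > 1: any (λ,C)-quasi-isometric map c : [a,b] → X with d(c(a), c(b)) ≥ Δ·C can be approximated up to 4ΔC by a continuous map d : [a,b] → X with d(a) = c(a), d(b) = c(b), which is a (λ, (8Δ+1)C)-quasi-isometric map and is (Δ/(Δ−1))·λ-Lipschitz. -/
open Metric Set Real

noncomputable section

variable {X : Type*} [MetricSpace X]

set_option maxHeartbeats 2000000 in
theorem quasi_geodesic_made_lipschitz_general
    (hX : GeodesicSpace X) {a b lam C Delta : ℝ} {c : ℝ → X}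
    (hc : QuasiIsometryOn lam C (Icc a b) c)
    (hDelta : Delta > 1)
    (hab : dist (c a) (c b) ≥ Delta * C) :
    ∃ d : ℝ → X, ContinuousOn d (Icc a b) ∧ d a = c a ∧ d b = c b ∧
      (∀ x ∈ Icc a b, dist (c x) (d x) ≤ 4 * Delta * C) ∧
      QuasiIsometryOn lam ((8 * Delta + 1) * C) (Icc a b) d ∧
      (∀ x ∈ Icc a b, ∀ y ∈ Icc a b, dist (d x) (d y) ≤ (Delta / (Delta - 1)) * lam * |y - x|) := by
  obtain ⟨hlam, hCnn, hcd⟩ := hc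
  have hlam0 : (0:ℝ) < lam := lt_of_lt_of_le one_pos hlam
  have hD1 : (0:ℝ) < Delta - 1 := by linarith
  obtain ⟨K, hKdef⟩ : ∃ K : ℝ, K = Delta / (Delta - 1) * lam := ⟨_, rfl⟩
  have hK0 : 0 ≤ K := by
    rw [hKdef]
    apply mul_nonneg _ hlam0.le
    apply div_nonneg (by linarith) hD1.le
  have hKlam : lam ≤ K := by
    rw [hKdef]
    have h1 : (1:ℝ) ≤ Delta / (Delta - 1) := by rw [le_div_iff₀ hD1]; linarith
    nlinarith
  have h8C : 0 ≤ (8 * Delta + 1) * C := by nlinarith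
  have hC8C : C ≤ (8 * Delta + 1) * C := by nlinarith
  by_cases hdeg : C = 0 ∨ ¬ a < b
  · -- degenerate case : take d = c
    have hLip : ∀ x ∈ Icc a b, ∀ y ∈ Icc a b, dist (c x) (c y) ≤ K * |y - x| := by
      intro x hx y hy
      rcases hdeg with h0 | hnab
      · have h2 := (hcd x hx y hy).2
        rw [h0] at h2
        have := mul_le_mul_of_nonneg_right hKlam (abs_nonneg (y - x))
        linarith
      · have hba : b ≤ a := not_lt.1 hnab
        have hxy : x = y := le_antisymm (le_trans hx.2 (le_trans hba hy.1))
          (le_trans hy.2 (le_trans hba hx.1))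
        simp [hxy]
    have hcont : ContinuousOn c (Icc a b) := by
      have : LipschitzOnWith (Real.toNNReal K) c (Icc a b) := by
        apply LipschitzOnWith.of_dist_le_mul
        intro x hx y hy
        rw [Real.coe_toNNReal _ hK0, Real.dist_eq]
        have := hLip x hx y hy
        rwa [abs_sub_comm] at this
      exact this.continuousOn
    refine ⟨c, hcont, rfl, rfl, ?_, ⟨hlam, h8C, ?_⟩, ?_⟩
    · intro x hx; simp; nlinarith
    · intro x hx y hy
      obtain ⟨hq1, hq2⟩ := hcd x hx y hy
      exact ⟨by linarith, by linarith⟩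
    · intro x hx y hy
      rw [← hKdef]
      exact hLip x hx y hy
  · push_neg at hdeg
    obtain ⟨hCne, haltb⟩ := hdeg
    have hCpos : 0 < C := lt_of_le_of_ne hCnn (Ne.symm hCne)
    have hamem : a ∈ Icc a b := ⟨le_rfl, haltb.le⟩
    have hbmem : b ∈ Icc a b := ⟨haltb.le, le_rfl⟩
    have hlen : (Delta - 1) * C ≤ lam * (b - a) := by
      have h2 := (hcd a hamem b hbmem).2
      rw [abs_of_pos (by linarith : (0:ℝ) < b - a)] at h2
      linarith
    have hx0pos : 0 < (Delta - 1) * C := mul_pos hD1 hCpos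
    obtain ⟨x0, hx0def⟩ : ∃ x0 : ℝ, x0 = (b - a) * lam / ((Delta - 1) * C) := ⟨_, rfl⟩
    have hx01 : 1 ≤ x0 := by
      rw [hx0def, le_div_iff₀ hx0pos]; nlinarith
    have hx0eq : x0 * ((Delta - 1) * C) = (b - a) * lam := by
      rw [hx0def]; exact div_mul_cancel₀ _ (ne_of_gt hx0pos)
    obtain ⟨N, hNdef⟩ : ∃ N : ℕ, N = ⌊x0⌋₊ := ⟨_, rfl⟩
    have hN1 : 1 ≤ N := by rw [hNdef]; exact Nat.le_floor (by exact_mod_cast hx01)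
    have hNpos : (0:ℝ) < N := by exact_mod_cast Nat.pos_of_ne_zero (by omega)
    have hNle : (N:ℝ) ≤ x0 := by rw [hNdef]; exact Nat.floor_le (by linarith)
    have hNge : x0 / 2 ≤ (N:ℝ) := by
      rcases le_or_gt x0 2 with hx2 | hx2
      · have : (1:ℝ) ≤ (N:ℝ) := by exact_mod_cast hN1
        linarith
      · have := Nat.sub_one_lt_floor x0
        rw [← hNdef] at this
        linarith
    obtain ⟨h, hhdef⟩ : ∃ h : ℝ, h = (b - a) / N := ⟨_, rfl⟩
    have hhpos : 0 < h := by rw [hhdef]; exact div_pos (by linarith) hNpos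
    have hhN : h * N = b - a := by rw [hhdef]; exact div_mul_cancel₀ _ (ne_of_gt hNpos)
    have hA : (Delta - 1) * C ≤ lam * h := by
      nlinarith [mul_le_mul_of_nonneg_left hNle hx0pos.le]
    have hB : lam * h ≤ 2 * ((Delta - 1) * C) := by
      nlinarith [mul_le_mul_of_nonneg_left hNge hx0pos.le]
    obtain ⟨t, htdef⟩ : ∃ t : ℕ → ℝ, t = fun i : ℕ => a + (i : ℝ) * h := ⟨_, rfl⟩
    have ht0 : t 0 = a := by simp [htdef]
    have htN : t N = b := by simp only [htdef]; linarith [hhN]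
    have htstep : ∀ i : ℕ, t (i + 1) = t i + h := by
      intro i; simp only [htdef]; push_cast; ring
    have htmono : ∀ i j : ℕ, i ≤ j → t i ≤ t j := by
      intro i j hij
      simp only [htdef]
      have : (i:ℝ) ≤ (j:ℝ) := by exact_mod_cast hij
      nlinarith
    have htmem : ∀ i : ℕ, i ≤ N → t i ∈ Icc a b := by
      intro i hi
      constructor
      · simp only [htdef]
        have : 0 ≤ (i:ℝ) * h := mul_nonneg (Nat.cast_nonneg i) hhpos.le
        linarith
      · rw [← htN]; exact htmono i N hi
    obtain ⟨D, hDdef⟩ : ∃ D : ℕ → ℝ, D = fun i => dist (c (t i)) (c (t (i + 1))) := ⟨_, rfl⟩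
    have hDnn : ∀ i, 0 ≤ D i := by intro i; simp only [hDdef]; exact dist_nonneg
    have hDle : ∀ i, i < N → D i ≤ lam * h + C := by
      intro i hi
      have h2 := (hcd (t i) (htmem i hi.le) (t (i+1)) (htmem (i+1) hi)).2
      have h3 : |t (i+1) - t i| = h := by rw [htstep i]; simp [abs_of_pos hhpos]
      rw [h3] at h2
      simp only [hDdef]
      exact h2
    have hDKh : ∀ i, i < N → D i ≤ K * h := by
      intro i hi
      have h1 := hDle i hi
      have h2 : lam * h + C ≤ K * h := by
        rw [hKdef, div_mul_eq_mul_div, div_mul_eq_mul_div, le_div_iff₀ hD1]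
        nlinarith
      linarith
    -- choose geodesics
    have hgex : ∀ i : ℕ, ∃ f : ℝ → X, f 0 = c (t i) ∧ f (D i) = c (t (i + 1)) ∧
        ∀ s ∈ Icc (0:ℝ) (D i), ∀ u ∈ Icc (0:ℝ) (D i), dist (f s) (f u) = |s - u| := by
      intro i
      obtain ⟨G, f, hf0, hfD, hfiso, -⟩ := hX (c (t i)) (c (t (i + 1)))
      simp only [hDdef]
      exact ⟨f, hf0, hfD, hfiso⟩
    choose g hg0 hgD hgiso using hgex
    obtain ⟨I, hIdef⟩ : ∃ I : ℝ → ℕ, I = fun u => min (N - 1) ⌊(u - a) / h⌋₊ := ⟨_, rfl⟩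
    obtain ⟨d, hddef⟩ : ∃ d : ℝ → X, d = fun u => g (I u) (D (I u) * ((u - t (I u)) / h)) :=
      ⟨_, rfl⟩
    have hImem : ∀ u ∈ Icc a b, I u < N ∧ t (I u) ≤ u ∧ u ≤ t (I u + 1) := by
      intro u hu
      have hun : 0 ≤ (u - a) / h := div_nonneg (by linarith [hu.1]) hhpos.le
      rcases le_or_gt ⌊(u - a) / h⌋₊ (N - 1) with hjN | hjN
      · have hIu : I u = ⌊(u - a) / h⌋₊ := by rw [hIdef]; exact min_eq_right hjN
        refine ⟨by omega, ?_, ?_⟩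
        · have h1 : (⌊(u - a) / h⌋₊ : ℝ) ≤ (u - a) / h := Nat.floor_le hun
          rw [le_div_iff₀ hhpos] at h1
          simp only [htdef, hIu]; linarith
        · have h1 : (u - a) / h < ⌊(u - a) / h⌋₊ + 1 := Nat.lt_floor_add_one _
          rw [div_lt_iff₀ hhpos] at h1
          simp only [htdef, hIu]; push_cast; nlinarith
      · have hIu : I u = N - 1 := by rw [hIdef]; exact min_eq_left hjN.le
        have hNj : N ≤ ⌊(u - a) / h⌋₊ := by omega
        have h1 : (N:ℝ) ≤ (u - a) / h := by
          exact_mod_cast (Nat.le_floor_iff hun).1 hNj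
        rw [le_div_iff₀ hhpos] at h1
        have hub : b ≤ u := by nlinarith [hhN]
        have hueq : u = b := le_antisymm hu.2 hub
        have hcast : ((N - 1 : ℕ) : ℝ) = (N:ℝ) - 1 := by
          rw [Nat.cast_sub hN1]; simp
        refine ⟨by omega, ?_, ?_⟩
        · rw [hIu, hueq, ← htN]
          exact htmono (N-1) N (by omega)
        · rw [hIu, hueq, ← htN]
          have : N - 1 + 1 = N := by omega
          rw [this]
    have hdval : ∀ i, i < N → ∀ u, t i ≤ u → u ≤ t (i + 1) →
        d u = g i (D i * ((u - t i) / h)) := by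
      intro i hiN u hul hur
      rcases lt_or_eq_of_le hur with hlt | heq
      · have h1 : (i:ℝ) * h ≤ u - a := by simp only [htdef] at hul; linarith
      
        have h2 : u - a < ((i:ℝ) + 1) * h := by
          rw [htstep i] at hlt
          simp only [htdef] at hlt; nlinarith
        have hua : 0 ≤ (u - a) / h := by
          apply div_nonneg _ hhpos.le
          nlinarith [Nat.cast_nonneg (α := ℝ) i]
        have hfl : ⌊(u - a) / h⌋₊ = i := by
          rw [Nat.floor_eq_iff hua]
          constructor
          · rw [le_div_iff₀ hhpos]; linarith
          · rw [div_lt_iff₀ hhpos]; push_cast; linarith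
        have hIu : I u = i := by
          rw [hIdef]; simp only [hfl]
          omega
        simp only [hddef, hIu]
      · rcases lt_or_eq_of_le (Nat.succ_le_of_lt hiN) with hi1 | hi1
        · have hua : u - a = ((i:ℝ) + 1) * h := by
            rw [htstep i] at heq
            simp only [htdef] at heq; linarith
          have hfl : ⌊(u - a) / h⌋₊ = i + 1 := by
            rw [hua, mul_div_cancel_right₀ _ (ne_of_gt hhpos)]
            rw [show ((i:ℝ) + 1) = ((i+1 : ℕ) : ℝ) by push_cast; ring]
            exact Nat.floor_natCast _
          have hIu : I u = i + 1 := by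
            rw [hIdef]; simp only [hfl]; omega
          simp only [hddef, hIu]
          have e1 : D (i+1) * ((u - t (i+1)) / h) = 0 := by rw [← heq]; simp
          have e2 : D i * ((u - t i) / h) = D i := by
            rw [heq, htstep i]
            rw [show t i + h - t i = h by ring, div_self (ne_of_gt hhpos), mul_one]
          rw [e1, e2, hg0, hgD]
        · have hua : u - a = (N:ℝ) * h := by
            rw [htstep i] at heq
            simp only [htdef] at heq
            rw [heq]
            have : ((i:ℝ) + 1) = (N:ℝ) := by exact_mod_cast congrArg (Nat.cast (R := ℝ)) hi1
            nlinarith [this]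
          have hfl : ⌊(u - a) / h⌋₊ = N := by
            rw [hua, mul_div_cancel_right₀ _ (ne_of_gt hhpos)]
            exact Nat.floor_natCast _
          have hIu : I u = i := by
            rw [hIdef]; simp only [hfl]; omega
          simp only [hddef, hIu]
    have hda : d a = c a := by
      have := hdval 0 (by omega) a (by rw [ht0]) (by rw [htstep 0, ht0]; linarith)
      rw [this, ht0]
      simp [hg0 0, ht0]
    have hdb : d b = c b := by
      have hN1' : N - 1 + 1 = N := by omega
      have h1 : t (N - 1) ≤ b := by rw [← htN]; exact htmono _ _ (by omega)
      have h2 : b ≤ t (N - 1 + 1) := by rw [hN1', htN]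
      have := hdval (N - 1) (by omega) b h1 h2
      rw [this]
      have e1 : b - t (N - 1) = h := by
        have := htstep (N - 1)
        rw [hN1', htN] at this
        linarith
      rw [e1, div_self (ne_of_gt hhpos), mul_one, hgD, hN1', htN]
    -- ratio membership
    have hratio : ∀ i, ∀ u, t i ≤ u → u ≤ t (i + 1) →
        D i * ((u - t i) / h) ∈ Icc (0:ℝ) (D i) := by
      intro i u hul hur
      have hr0 : 0 ≤ (u - t i) / h := div_nonneg (by linarith) hhpos.le
      have hr1 : (u - t i) / h ≤ 1 := by
        rw [div_le_one hhpos]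
        rw [htstep i] at hur; linarith
      constructor
      · exact mul_nonneg (hDnn i) hr0
      · nlinarith [hDnn i]
    have hpiece : ∀ i, i < N → ∀ s, t i ≤ s → s ≤ t (i + 1) → ∀ u, t i ≤ u → u ≤ t (i + 1) →
        dist (d s) (d u) ≤ K * |u - s| := by
      intro i hi s hs1 hs2 u hu1 hu2
      rw [hdval i hi s hs1 hs2, hdval i hi u hu1 hu2]
      rw [hgiso i _ (hratio i s hs1 hs2) _ (hratio i u hu1 hu2)]
      have e : D i * ((s - t i) / h) - D i * ((u - t i) / h) = D i * ((s - u) / h) := by ring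
      rw [e, abs_mul, abs_of_nonneg (hDnn i), abs_div, abs_of_pos hhpos, abs_sub_comm s u]
      rw [mul_div_assoc', div_le_iff₀ hhpos]
      have := hDKh i hi
      nlinarith [abs_nonneg (u - s)]
    have hglob : ∀ n : ℕ, n ≤ N → ∀ s, t 0 ≤ s → s ≤ t n → ∀ u, t 0 ≤ u → u ≤ t n →
        dist (d s) (d u) ≤ K * |u - s| := by
      intro n
      induction n with
      | zero =>
        intro _ s hs1 hs2 u hu1 hu2
        have : s = u := by linarith
        rw [this]; simp
      | succ n ih =>
        intro hn s hs1 hs2 u hu1 hu2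
        have hnN : n ≤ N := by omega
        have hnlt : n < N := by omega
        have ht0n : t 0 ≤ t n := htmono 0 n (by omega)
        have htnn1 : t n ≤ t (n + 1) := by rw [htstep n]; linarith
        have key : ∀ s, t 0 ≤ s → ∀ u, s ≤ u → u ≤ t (n+1) → t 0 ≤ u →
            dist (d s) (d u) ≤ K * |u - s| := by
          intro s hs1 u hsu hu2 hu1
          rcases le_total u (t n) with h1 | h1
          · exact ih hnN s hs1 (le_trans hsu h1) u hu1 h1
          · rcases le_total (t n) s with h2 | h2
            · exact hpiece n hnlt s h2 (le_trans hsu hu2) u h1 hu2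
            · calc dist (d s) (d u) ≤ dist (d s) (d (t n)) + dist (d (t n)) (d u) :=
                    dist_triangle _ _ _
                _ ≤ K * |t n - s| + K * |u - t n| :=
                    add_le_add (ih hnN s hs1 h2 (t n) ht0n le_rfl)
                      (hpiece n hnlt (t n) le_rfl htnn1 u h1 hu2)
                _ = K * |u - s| := by
                    rw [abs_of_nonneg (by linarith), abs_of_nonneg (by linarith),
                      abs_of_nonneg (by linarith)]
                    ring
        rcases le_total s u with hsu | hsu
        · exact key s hs1 u hsu hu2 hu1
        · rw [dist_comm, abs_sub_comm]
          exact key u hu1 s hsu hs2 hs1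
    have hglobal : ∀ x ∈ Icc a b, ∀ y ∈ Icc a b, dist (d x) (d y) ≤ K * |y - x| := by
      intro x hx y hy
      exact hglob N le_rfl x (by rw [ht0]; exact hx.1) (by rw [htN]; exact hx.2)
        y (by rw [ht0]; exact hy.1) (by rw [htN]; exact hy.2)
    have happrox : ∀ u ∈ Icc a b, dist (c u) (d u) ≤ 4 * Delta * C := by
      intro u hu
      obtain ⟨hiN, hul, hur⟩ := hImem u hu
      have hdu : d u = g (I u) (D (I u) * ((u - t (I u)) / h)) := hdval (I u) hiN u hul hur
      have h1 : dist (c (t (I u))) (d u) ≤ D (I u) := by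
        rw [hdu]
        nth_rewrite 1 [← hg0 (I u)]
        rw [hgiso (I u) 0 ⟨le_rfl, hDnn _⟩ _ (hratio (I u) u hul hur)]
        rw [zero_sub, abs_neg, abs_of_nonneg (hratio (I u) u hul hur).1]
        exact (hratio (I u) u hul hur).2
      have h2 : dist (c u) (c (t (I u))) ≤ lam * h + C := by
        have h3 := (hcd u hu (t (I u)) (htmem _ hiN.le)).2
        have habs : |t (I u) - u| ≤ h := by
          rw [abs_le]
          rw [htstep (I u)] at hur
          constructor <;> linarith
        nlinarith [mul_le_mul_of_nonneg_left habs hlam0.le]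
      have h4 := hDle (I u) hiN
      calc dist (c u) (d u) ≤ dist (c u) (c (t (I u))) + dist (c (t (I u))) (d u) :=
            dist_triangle _ _ _
        _ ≤ 4 * Delta * C := by linarith [hB, hCpos.le]
    have hcont : ContinuousOn d (Icc a b) := by
      have : LipschitzOnWith (Real.toNNReal K) d (Icc a b) := by
        apply LipschitzOnWith.of_dist_le_mul
        intro x hx y hy
        rw [Real.coe_toNNReal _ hK0, Real.dist_eq]
        have := hglobal x hx y hy
        rwa [abs_sub_comm] at this
      exact this.continuousOn
    refine ⟨d, hcont, hda, hdb, happrox, ⟨hlam, h8C, ?_⟩, ?_⟩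
    · intro x hx y hy
      obtain ⟨hq1, hq2⟩ := hcd x hx y hy
      have e1 := happrox x hx
      have e2 := happrox y hy
      have t1 : dist (c x) (c y) ≤ dist (c x) (d x) + dist (d x) (d y) + dist (d y) (c y) :=
        dist_triangle4 _ _ _ _
      have t2 : dist (d x) (d y) ≤ dist (d x) (c x) + dist (c x) (c y) + dist (c y) (d y) :=
        dist_triangle4 _ _ _ _
      have e3 : dist (d y) (c y) = dist (c y) (d y) := dist_comm _ _
      have e4 : dist (d x) (c x) = dist (c x) (d x) := dist_comm _ _
      refine ⟨by linarith, by linarith⟩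
    · intro x hx y hy
      rw [← hKdef]
      exact hglobal x hx y hy
end
end

section
/- Let X be a δ-hyperbolic geodesic space and G ⊆ X a K-quasiconvex set. Let f : [a,b] → X be continuous, and for each t let p(t) be a closest-point projection of f(t) on G. Then for any d with 4δ + 2K ≤ d ≤ d(p(a), p(b)), there exists t ∈ [a,b] such that d(p(a), p(t)) ∈ [d − 4δ − 2K, d] and d(p(a), p(s)) ≤ d for all s ∈ [a,t]. (Closest-point projections of connected sets on K-quasiconvex sets have gaps of size at most 4δ + 2K.) -/
open Metric Set Real

noncomputable section

variable {X : Type*} [MetricSpace X]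

lemma hyp_delta_nonneg {δ : ℝ} (hδ : IsHyperbolic X δ) (x : X) : 0 ≤ δ := by
  have := hδ x x x x
  simp [gromovProd] at this
  linarith

lemma exists_near_gromov {δ : ℝ} (hδ : IsHyperbolic X δ) {Γ : Set X} {pp q : X}
    (hΓ : GeodesicSegmentBetween Γ pp q) (x : X) :
    ∃ y ∈ Γ, dist x y ≤ gromovProd pp q x + 2 * δ := by
  obtain ⟨g, hg0, hgL, hiso, hEq⟩ := hΓ
  set L := dist pp q with hL
  set t : ℝ := (L + dist x pp - dist x q) / 2 with ht
  have h1 : dist x pp ≤ dist x q + L := by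
    have := dist_triangle x q pp
    simpa [hL, dist_comm] using this
  have h2 : dist x q ≤ dist x pp + L := by
    have := dist_triangle x pp q
    simpa [hL] using this
  have htmem : t ∈ Icc (0:ℝ) L := by constructor <;> [skip; skip] <;> simp [ht] <;> linarith
  refine ⟨g t, by rw [hEq]; exact ⟨t, htmem, rfl⟩, ?_⟩
  have hd1 : dist pp (g t) = t := by
    have := hiso 0 ⟨le_rfl, dist_nonneg⟩ t htmem
    rw [hg0] at this
    rw [this, abs_of_nonpos (by linarith [htmem.1]), neg_sub, sub_zero]
  have hd2 : dist (g t) q = L - t := by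
    have := hiso t htmem L ⟨dist_nonneg, le_rfl⟩
    rw [hgL] at this
    rw [this, abs_of_nonpos (by linarith [htmem.2])]
    ring
  have hyp := hδ pp (g t) q x
  have heq : gromovProd pp (g t) x = gromovProd (g t) q x := by
    simp only [gromovProd, hd1, hd2, dist_comm pp x, dist_comm q x]
    rw [ht]
    ring
  rw [heq, min_self] at hyp
  simp only [gromovProd, hd1, hd2, ht] at hyp ⊢
  have e1 : dist (g t) x = dist x (g t) := dist_comm _ _
  have e2 : dist pp x = dist x pp := dist_comm _ _
  have e3 : dist q x = dist x q := dist_comm _ _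
  rw [e1, e2, e3] at hyp
  rw [e2, e3]
  linarith

lemma proj_tree {δ K : ℝ} (hδ : IsHyperbolic X δ) {G : Set X} (hG : Quasiconvex K G)
    {P x q : X} (hP : ProjOn P x G) (hq : q ∈ G) :
    dist x P + dist P q ≤ dist x q + 4 * δ + 2 * K := by
  obtain ⟨Γ, hΓ, hK⟩ := hG P hP.1 q hq
  obtain ⟨y, hy, hdy⟩ := exists_near_gromov hδ hΓ x
  have hinf : infDist x G ≤ infDist y G + dist x y :=
    infDist_le_infDist_add_dist
  have h2 : infDist y G ≤ K := hK y hy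
  have h3 : dist x P ≤ gromovProd P q x + 2 * δ + K := by
    rw [hP.2]
    calc infDist x G ≤ infDist y G + dist x y := hinf
      _ ≤ (gromovProd P q x + 2 * δ) + K := by linarith
  simp only [gromovProd] at h3
  have e1 : dist P x = dist x P := dist_comm _ _
  have e2 : dist q x = dist x q := dist_comm _ _
  rw [e1, e2] at h3
  linarith

lemma proj_lipschitz {δ K : ℝ} (hδ : IsHyperbolic X δ) {G : Set X} (hG : Quasiconvex K G)
    {P Q x y : X} (hP : ProjOn P x G) (hQ : ProjOn Q y G) :
    dist P Q ≤ dist x y + 4 * δ + 2 * K := by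
  have h1 := proj_tree hδ hG hP hQ.1
  have h2 := proj_tree hδ hG hQ hP.1
  have t1 : dist x Q ≤ dist x y + dist y Q := dist_triangle _ _ _
  have t2 : dist y P ≤ dist y x + dist x P := dist_triangle _ _ _
  have e1 : dist Q P = dist P Q := dist_comm _ _
  have e2 : dist y x = dist x y := dist_comm _ _
  linarith

theorem quasi_convex_projection_small_gaps' {δ K : ℝ}
    (hδ : IsHyperbolic X δ)
    {a b : ℝ} (hab : a ≤ b) {f : ℝ → X} (hf : ContinuousOn f (Icc a b))
    {G : Set X} (hG : Quasiconvex K G)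
    {p : ℝ → X} (hp : ∀ t ∈ Icc a b, ProjOn (p t) (f t) G)
    {d : ℝ} (hd : d ∈ Icc (4 * δ + 2 * K) (dist (p a) (p b))) :
    ∃ t ∈ Icc a b, dist (p a) (p t) ∈ Icc (d - 4 * δ - 2 * K) d ∧
      ∀ s ∈ Icc a t, dist (p a) (p s) ≤ d := by
  have haab : a ∈ Icc a b := ⟨le_rfl, hab⟩
  have hbab : b ∈ Icc a b := ⟨hab, le_rfl⟩
  have hδ0 : 0 ≤ δ := hyp_delta_nonneg hδ (p a)
  have hpaG : p a ∈ G := (hp a haab).1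
  have hK0 : 0 ≤ K := by
    obtain ⟨Γ, ⟨g, hg0, _, _, hEq⟩, hK⟩ := hG (p a) hpaG (p a) hpaG
    have hmem : p a ∈ Γ := by
      rw [hEq]; exact ⟨0, ⟨le_rfl, dist_nonneg⟩, hg0⟩
    have := hK (p a) hmem
    rwa [infDist_zero_of_mem hpaG] at this
  have hd0 : 0 ≤ d := le_trans (by linarith) hd.1
  have key : ∀ s ∈ Icc a b, ∀ t ∈ Icc a b,
      dist (p s) (p t) ≤ dist (f s) (f t) + 4 * δ + 2 * K := fun s hs t ht =>
    proj_lipschitz hδ hG (hp s hs) (hp t ht)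
  set S : Set ℝ := {t | t ∈ Icc a b ∧ ∀ s ∈ Icc a t, dist (p a) (p s) ≤ d} with hS
  have haS : a ∈ S := by
    refine ⟨haab, fun s hs => ?_⟩
    have : s = a := le_antisymm hs.2 hs.1
    simp [this, hd0]
  have hSne : S.Nonempty := ⟨a, haS⟩
  have hSbdd : BddAbove S := ⟨b, fun t ht => ht.1.2⟩
  set t₀ : ℝ := sSup S with ht₀
  have ht₀a : a ≤ t₀ := le_csSup hSbdd haS
  have ht₀b : t₀ ≤ b := csSup_le hSne fun t ht => ht.1.2
  have ht₀ab : t₀ ∈ Icc a b := ⟨ht₀a, ht₀b⟩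
  have claim1 : ∀ s, a ≤ s → s < t₀ → dist (p a) (p s) ≤ d := by
    intro s hsa hst
    obtain ⟨u, huS, hsu⟩ := exists_lt_of_lt_csSup hSne hst
    exact huS.2 s ⟨hsa, hsu.le⟩
  by_cases hcase : dist (p a) (p t₀) ≤ d
  · have hall : ∀ s ∈ Icc a t₀, dist (p a) (p s) ≤ d := by
      intro s hs
      rcases lt_or_eq_of_le hs.2 with h | h
      · exact claim1 s hs.1 h
      · rw [h]; exact hcase
    refine ⟨t₀, ht₀ab, ⟨?_, hcase⟩, hall⟩
    rcases eq_or_lt_of_le ht₀b with hb | hb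
    · rw [hb]
      linarith [hd.2]
    · -- t₀ < b; show d - ... ≤ dist
      by_contra hlt
      push_neg at hlt
      set ε : ℝ := d - 4 * δ - 2 * K - dist (p a) (p t₀) with hε
      have hε0 : 0 < ε := by linarith
      have hcont := (hf t₀ ht₀ab)
      rw [Metric.continuousWithinAt_iff] at hcont
      obtain ⟨η, hη0, hη⟩ := hcont ε hε0
      set t₁ : ℝ := min b (t₀ + η / 2) with ht₁
      have ht₀t₁ : t₀ < t₁ := lt_min hb (by linarith)
      have ht₁ab : t₁ ∈ Icc a b := ⟨le_trans ht₀a ht₀t₁.le, min_le_left _ _⟩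
      have ht₁S : t₁ ∈ S := by
        refine ⟨ht₁ab, fun s hs => ?_⟩
        rcases le_or_gt s t₀ with h | h
        · exact hall s ⟨hs.1, h⟩
        · have hsab : s ∈ Icc a b := ⟨hs.1, le_trans hs.2 ht₁ab.2⟩
          have hds : dist s t₀ < η := by
            rw [Real.dist_eq, abs_of_pos (by linarith)]
            have : s ≤ t₀ + η / 2 := le_trans hs.2 (min_le_right _ _)
            linarith
          have hfs : dist (f s) (f t₀) < ε := hη hsab hds
          have h1 := key t₀ ht₀ab s hsab
          have h2 : dist (p a) (p s) ≤ dist (p a) (p t₀) + dist (p t₀) (p s) :=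
            dist_triangle _ _ _
          have e1 : dist (f t₀) (f s) = dist (f s) (f t₀) := dist_comm _ _
          linarith
      have : t₁ ≤ t₀ := le_csSup hSbdd ht₁S
      linarith
  · push_neg at hcase
    have hat₀ : a < t₀ := by
      rcases eq_or_lt_of_le ht₀a with h | h
      · exfalso
        rw [← h] at hcase
        simp at hcase
        linarith
      · exact h
    set ε : ℝ := dist (p a) (p t₀) - d with hε
    have hε0 : 0 < ε := by linarith
    have hcont := (hf t₀ ht₀ab)
    rw [Metric.continuousWithinAt_iff] at hcont
    obtain ⟨η, hη0, hη⟩ := hcont ε hε0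
    set s₀ : ℝ := max a (t₀ - η / 2) with hs₀
    have hs₀a : a ≤ s₀ := le_max_left _ _
    have hs₀t₀ : s₀ < t₀ := max_lt hat₀ (by linarith)
    have hs₀ab : s₀ ∈ Icc a b := ⟨hs₀a, le_trans hs₀t₀.le ht₀b⟩
    have hds : dist s₀ t₀ < η := by
      rw [Real.dist_eq, abs_of_neg (by linarith)]
      have : t₀ - η / 2 ≤ s₀ := le_max_right _ _
      linarith
    have hfs : dist (f s₀) (f t₀) < ε := hη hs₀ab hds
    have h1 := key s₀ hs₀ab t₀ ht₀ab
    have h2 : dist (p a) (p t₀) ≤ dist (p a) (p s₀) + dist (p s₀) (p t₀) :=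
      dist_triangle _ _ _
    refine ⟨s₀, hs₀ab, ⟨by linarith, claim1 s₀ hs₀a hs₀t₀⟩, fun s hs => ?_⟩
    exact claim1 s hs.1 (lt_of_le_of_lt hs.2 hs₀t₀)

theorem quasi_convex_projection_small_gaps {δ K : ℝ}
    (hX : GeodesicSpace X) (hδ : IsHyperbolic X δ)
    {a b : ℝ} (hab : a ≤ b) {f : ℝ → X} (hf : ContinuousOn f (Icc a b))
    {G : Set X} (hG : Quasiconvex K G)
    {p : ℝ → X} (hp : ∀ t ∈ Icc a b, ProjOn (p t) (f t) G)
    {d : ℝ} (hd : d ∈ Icc (4 * δ + 2 * K) (dist (p a) (p b))) :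
    ∃ t ∈ Icc a b, dist (p a) (p t) ∈ Icc (d - 4 * δ - 2 * K) d ∧
      ∀ s ∈ Icc a t, dist (p a) (p s) ≤ d := by
  exact quasi_convex_projection_small_gaps' hδ hab hf hG hp hd
end
end

section
/- Let X be a δ-hyperbolic geodesic space and G a K-quasiconvex subset. If p_x is a closest-point projection of x on G and p_y a closest-point projection of y on G, then d(p_x, p_y) ≤ max(5δ + 2K, d(x,y) − d(x,p_x) − d(y,p_y) + 10δ + 4K). -/
open Metric Set Real

noncomputable section

variable {X : Type*} [MetricSpace X]

/-- Any point is within `gromovProd p q x + 2δ` of some point of a geodesic from `p` to `q`. -/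
lemma exists_point_near_geodesic {δ : ℝ} (hδ : IsHyperbolic X δ) {H : Set X} {p q : X}
    (hH : GeodesicSegmentBetween H p q) (x : X) :
    ∃ z ∈ H, dist x z ≤ gromovProd p q x + 2 * δ := by
  obtain ⟨f, h0, hd, hiso, hHeq⟩ := hH
  set t : ℝ := (dist x p + dist q p - dist x q) / 2 with ht
  have ht0 : 0 ≤ t := by
    have h1 := dist_triangle x p q
    have h2 := dist_comm p q
    simp only [ht]; linarith
  have ht1 : t ≤ dist p q := by
    have h1 := dist_triangle x q p
    have h2 := dist_comm p q
    have h3 := dist_comm q p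
    simp only [ht]; linarith
  have htmem : t ∈ Icc (0:ℝ) (dist p q) := ⟨ht0, ht1⟩
  refine ⟨f t, by rw [hHeq]; exact ⟨t, htmem, rfl⟩, ?_⟩
  have dpz : dist p (f t) = t := by
    have := hiso 0 ⟨le_refl 0, dist_nonneg⟩ t htmem
    rw [h0] at this
    rw [this, zero_sub, abs_neg, abs_of_nonneg ht0]
  have dzq : dist (f t) q = dist p q - t := by
    have := hiso t htmem (dist p q) ⟨dist_nonneg, le_refl _⟩
    rw [hd] at this
    rw [this, abs_of_nonpos (by linarith)]
    ring
  have h4 := hδ p (f t) q x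
  have hAB : gromovProd p (f t) x = gromovProd (f t) q x := by
    unfold gromovProd
    rw [dpz, dzq]
    have c1 := dist_comm p x
    have c2 := dist_comm q x
    have c3 := dist_comm p q
    simp only [ht]; linarith
  rw [min_eq_left hAB.le] at h4
  unfold gromovProd at h4 ⊢
  rw [dpz] at h4
  have c1 := dist_comm x (f t)
  have c2 := dist_comm p x
  have c3 := dist_comm q x
  have c4 := dist_comm p q
  simp only [ht] at h4
  linarith

/-- Projection lemma: going through a projection on a quasiconvex set is almost optimal. -/
lemma proj_dist_lemma {δ K : ℝ} (hδ : IsHyperbolic X δ) {G : Set X} (hG : Quasiconvex K G)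
    {x p : X} (hp : ProjOn p x G) {q : X} (hq : q ∈ G) :
    dist x p + dist p q ≤ dist x q + 4 * δ + 2 * K := by
  obtain ⟨H, hH, hHK⟩ := hG p hp.1 q hq
  obtain ⟨z, hz, hdz⟩ := exists_point_near_geodesic hδ hH x
  have h1 : infDist x G ≤ infDist z G + dist x z := infDist_le_infDist_add_dist
  have h2 : infDist z G ≤ K := hHK z hz
  have h3 := hp.2
  unfold gromovProd at hdz
  have c1 := dist_comm p x
  have c2 := dist_comm q x
  linarith

theorem proj_along_quasiconvex_contraction {δ K : ℝ}
    (hX : GeodesicSpace X) (hδ : IsHyperbolic X δ)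
    {G : Set X} (hG : Quasiconvex K G)
    {x y px py : X} (hpx : ProjOn px x G) (hpy : ProjOn py y G) :
    dist px py ≤ max (5 * δ + 2 * K)
      (dist x y - dist x px - dist y py + 10 * δ + 4 * K) := by
  have hx := proj_dist_lemma hδ hG hpx hpy.1
  have hy := proj_dist_lemma hδ hG hpy hpx.1
  have h4 := hδ x y py px
  have hupper : gromovProd x py px ≤ 2 * δ + K := by
    unfold gromovProd
    have c1 := dist_comm x px
    have c2 := dist_comm py px
    linarith
  rcases le_total (gromovProd x y px) (gromovProd y py px) with hmin | hmin
  · rw [min_eq_left hmin] at h4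
    refine le_trans ?_ (le_max_right _ _)
    unfold gromovProd at h4
    have c1 := dist_comm x px
    have c2 := dist_comm y px
    have c3 := dist_comm py px
    have c4 := dist_comm px py
    linarith
  · rw [min_eq_right hmin] at h4
    refine le_trans ?_ (le_max_left _ _)
    unfold gromovProd at h4
    have c1 := dist_comm y px
    have c2 := dist_comm py px
    have c3 := dist_comm px py
    linarith
end
end

section
/- Let X be a δ-hyperbolic geodesic space, f : [u⁻,u⁺] → X a continuous (λ,C)-quasi-isometric map, G a geodesic from f(u⁻) to f(u⁺), z ∈ [u⁻, u⁺], π_z a projection of f(z) on G, H a geodesic from π_z to f(z), and L > 0 with d(f(z), G) > L. If x ∈ [u⁻, z] and m⁺ ∈ [z, u⁺] are such that the closest-point projections on H of f(x) and f(m⁺) are both within distance L of π_z, and G' is a geodesic from f(x) to f(m⁺), then d(f(z), G) ≤ d(f(z), G') + L + 4δ. -/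
open Metric Set Real

noncomputable section

variable {X : Type*} [MetricSpace X]

lemma delta_nonneg' {δ : ℝ} (hδ : IsHyperbolic X δ) (a : X) : 0 ≤ δ := by
  have := hδ a a a a
  simp [gromovProd] at this
  linarith

lemma left_mem_geo {S : Set X} {u v : X} (h : GeodesicSegmentBetween S u v) : u ∈ S := by
  obtain ⟨g, h0, hT, _, hS⟩ := h
  rw [hS]; exact ⟨0, ⟨le_refl _, dist_nonneg⟩, h0⟩

lemma right_mem_geo {S : Set X} {u v : X} (h : GeodesicSegmentBetween S u v) : v ∈ S := by
  obtain ⟨g, h0, hT, _, hS⟩ := h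
  rw [hS]; exact ⟨dist u v, ⟨dist_nonneg, le_refl _⟩, hT⟩

lemma gromov_le_infDist {S : Set X} {u v : X} (h : GeodesicSegmentBetween S u v) (a : X) :
    gromovProd u v a ≤ infDist a S := by
  obtain ⟨g, h0, hT, hiso, hS⟩ := h
  have hne : S.Nonempty := ⟨u, by rw [hS]; exact ⟨0, ⟨le_refl _, dist_nonneg⟩, h0⟩⟩
  haveI := hne.to_subtype
  rw [infDist_eq_iInf]
  refine le_ciInf fun w => ?_
  have hw : (w : X) ∈ g '' Icc (0:ℝ) (dist u v) := hS ▸ w.2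
  obtain ⟨t, ht, hgt⟩ := hw
  have h1 : dist u (w : X) = t := by
    rw [← h0, ← hgt, hiso 0 ⟨le_refl _, dist_nonneg⟩ t ht,
      abs_of_nonpos (by linarith [ht.1])]; ring
  have h2 : dist (w : X) v = dist u v - t := by
    have h' := hiso t ht (dist u v) ⟨dist_nonneg, le_refl _⟩
    rw [hgt, hT] at h'
    rw [h', abs_of_nonpos (by linarith [ht.2])]; ring
  simp only [gromovProd]
  have t1 : dist u a ≤ dist u (w : X) + dist (w : X) a := dist_triangle _ _ _
  have t2 : dist v a ≤ dist v (w : X) + dist (w : X) a := dist_triangle _ _ _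
  have c1 : dist v (w : X) = dist (w : X) v := dist_comm _ _
  have c2 : dist (w : X) a = dist a (w : X) := dist_comm _ _
  linarith

lemma proj_dist_along {δ : ℝ} (hδ : IsHyperbolic X δ) {S : Set X} {u v p q a : X}
    (h : GeodesicSegmentBetween S u v) (hp : ProjOn p a S) (hq : q ∈ S) :
    dist a p + dist p q ≤ dist a q + 4 * δ := by
  obtain ⟨g, h0, hT, hiso, hS⟩ := h
  obtain ⟨s, hs, hgs⟩ := hS ▸ hp.1
  obtain ⟨t, ht, hgt⟩ := hS ▸ hq
  have hpq : dist p q = |s - t| := by rw [← hgs, ← hgt]; exact hiso s hs t ht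
  set γ := gromovProd a q p with hγ
  have hg0 : 0 ≤ γ := by
    simp only [hγ, gromovProd]; linarith [dist_triangle a p q, dist_comm q p, dist_comm a q]
  have hg1 : γ ≤ dist p q := by
    simp only [hγ, gromovProd]; linarith [dist_triangle a q p, dist_comm q p, dist_comm a q]
  have key : ∃ r ∈ Icc (0:ℝ) (dist u v), dist p (g r) = γ ∧ dist (g r) q = dist p q - γ := by
    rcases le_total s t with hst | hst
    · have hγt : γ ≤ t - s := by rw [hpq, abs_of_nonpos (by linarith)] at hg1; linarith
      have hr : s + γ ∈ Icc (0:ℝ) (dist u v) := ⟨by linarith [hs.1], by linarith [ht.2]⟩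
      refine ⟨s + γ, hr, ?_, ?_⟩
      · rw [← hgs, hiso s hs (s + γ) hr, abs_of_nonpos (by linarith)]; ring
      · have h' := hiso (s + γ) hr t ht
        rw [hgt] at h'
        rw [h', hpq, abs_of_nonpos (by linarith), abs_of_nonpos (by linarith)]; ring
    · have hγt : γ ≤ s - t := by rw [hpq, abs_of_nonneg (by linarith)] at hg1; linarith
      have hr : s - γ ∈ Icc (0:ℝ) (dist u v) := ⟨by linarith [ht.1], by linarith [hs.2]⟩
      refine ⟨s - γ, hr, ?_, ?_⟩
      · rw [← hgs, hiso s hs (s - γ) hr, abs_of_nonneg (by linarith)]; ring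
      · have h' := hiso (s - γ) hr t ht
        rw [hgt] at h'
        rw [h', hpq, abs_of_nonneg (by linarith), abs_of_nonneg (by linarith)]; ring
  obtain ⟨r, hr, hm1, hm2⟩ := key
  set m := g r with hm
  have hmem : m ∈ S := by rw [hS]; exact ⟨r, hr, rfl⟩
  have hproj : dist a p ≤ dist a m := by rw [hp.2]; exact infDist_le_dist_of_mem hmem
  have hm1' : dist p m = (dist a p + dist q p - dist a q) / 2 := by
    rw [hm1]; simp only [hγ, gromovProd]
  have hm2' : dist m q = dist p q - (dist a p + dist q p - dist a q) / 2 := by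
    rw [hm2]; simp only [hγ, gromovProd]
  have hyp := hδ p m q a
  set V := (dist m a + gromovProd p q a) / 2 with hV
  have hA : V ≤ gromovProd p m a := by
    simp only [hV, gromovProd]
    linarith [hm1', dist_comm a p, dist_comm q p, dist_comm a q, dist_comm m a]
  have hB : V ≤ gromovProd m q a := by
    simp only [hV, gromovProd]
    linarith [hm2', dist_comm a p, dist_comm q p, dist_comm a q, dist_comm m a]
  have hmin : V - δ ≤ gromovProd p q a := le_trans (by linarith [le_min hA hB]) hyp
  have hfin : dist m a ≤ gromovProd p q a + 2 * δ := by
    simp only [hV] at hmin; linarith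
  simp only [gromovProd] at hfin
  linarith [dist_comm a m, dist_comm p a, dist_comm q a]

theorem dist_to_geodesic_reduction {δ lam C L : ℝ}
    (hX : GeodesicSpace X) (hδ : IsHyperbolic X δ)
    {um up z x mp : ℝ} {f : ℝ → X}
    (hf : QuasiIsometryOn lam C (Icc um up) f)
    (hcont : ContinuousOn f (Icc um up))
    (hz : z ∈ Icc um up)
    {G H G' : Set X} {πz px pm : X}
    (hG : GeodesicSegmentBetween G (f um) (f up))
    (hπ : ProjOn πz (f z) G)
    (hH : GeodesicSegmentBetween H πz (f z))
    (hL : 0 < L) (hfar : L < infDist (f z) G)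
    (hx : x ∈ Icc um z) (hm : mp ∈ Icc z up)
    (hpx : ProjOn px (f x) H) (hpm : ProjOn pm (f mp) H)
    (hpxL : dist px πz ≤ L) (hpmL : dist pm πz ≤ L)
    (hG' : GeodesicSegmentBetween G' (f x) (f mp)) :
    infDist (f z) G ≤ infDist (f z) G' + L + 4 * δ := by

  have hδ0 : 0 ≤ δ := delta_nonneg' hδ (f z)
  have hfzH : f z ∈ H := right_mem_geo hH
  have B1 := proj_dist_along hδ hH hpx hfzH
  have B2 := proj_dist_along hδ hH hpm hfzH
  have tx : dist (f x) πz ≤ dist (f x) px + L :=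
    le_trans (dist_triangle _ px _) (by linarith)
  have tm : dist (f mp) πz ≤ dist (f mp) pm + L :=
    le_trans (dist_triangle _ pm _) (by linarith)
  have ux : dist πz (f z) ≤ dist πz px + dist px (f z) := dist_triangle _ _ _
  have um' : dist πz (f z) ≤ dist πz pm + dist pm (f z) := dist_triangle _ _ _
  have gx : dist πz (f z) - L - 2 * δ ≤ gromovProd (f x) πz (f z) := by
    simp only [gromovProd]
    linarith [dist_comm πz px, dist_comm pm πz, dist_comm (f x) πz, dist_comm px (f z)]
  have gm : dist πz (f z) - L - 2 * δ ≤ gromovProd πz (f mp) (f z) := by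
    simp only [gromovProd]
    linarith [dist_comm πz pm, dist_comm (f mp) πz, dist_comm πz (f mp), dist_comm pm (f z)]
  have hyp := hδ (f x) πz (f mp) (f z)
  have hminb : dist πz (f z) - L - 2 * δ ≤ min (gromovProd (f x) πz (f z)) (gromovProd πz (f mp) (f z)) :=
    le_min gx gm
  have glow : gromovProd (f x) (f mp) (f z) ≤ infDist (f z) G' := gromov_le_infDist hG' (f z)
  have hD : dist (f z) πz = infDist (f z) G := hπ.2
  linarith [dist_comm (f z) πz]
end
end

section
/- Let H be a geodesic from π to q in a δ-hyperbolic geodesic space. For k ≥ 0 and d⁻ > 0, let V_k be the (2^k − 1)d⁻-neighborhood of H. For a point x with closest-point projection p₀(x) on H, let p_k(x) be the point on a geodesic from p₀(x) to x at distance min((2^k − 1)d⁻, d(p₀(x), x)) from p₀(x). Then p_k(x) is a closest-point projection of x on V_k, and for k ≤ ℓ, p_k(x) is a closest-point projection of p_ℓ(x) on V_k. -/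
open Metric Set Real

noncomputable section

variable {X : Type*} [MetricSpace X]

theorem nested_projections_on_neighborhoods {δ dm : ℝ}
    (hX : GeodesicSpace X) (hδ : IsHyperbolic X δ) (hdm : 0 < dm)
    {H : Set X} {pi0 q x p₀ : X}
    (hH : GeodesicSegmentBetween H pi0 q)
    (hp₀ : ProjOn p₀ x H)
    {c : ℝ → X} (hc0 : c 0 = p₀) (hc1 : c (dist p₀ x) = x)
    (hciso : ∀ s ∈ Icc (0:ℝ) (dist p₀ x), ∀ t ∈ Icc (0:ℝ) (dist p₀ x),
      dist (c s) (c t) = |s - t|)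
    (pk : ℕ → X)
    (hpk : ∀ k : ℕ, pk k = c (min (((2:ℝ) ^ k - 1) * dm) (dist p₀ x))) :
    (∀ k : ℕ, ProjOn (pk k) x {y : X | infDist y H ≤ ((2:ℝ) ^ k - 1) * dm}) ∧
    (∀ k l : ℕ, k ≤ l →
      ProjOn (pk k) (pk l) {y : X | infDist y H ≤ ((2:ℝ) ^ k - 1) * dm}) := by

  have hD0 : (0:ℝ) ≤ dist p₀ x := dist_nonneg
  have hr : ∀ k : ℕ, 0 ≤ ((2:ℝ) ^ k - 1) * dm := by
    intro k
    have h1 : (1:ℝ) ≤ 2 ^ k := one_le_pow₀ (by norm_num)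
    nlinarith [hdm.le]
  have hmIcc : ∀ k : ℕ, min (((2:ℝ) ^ k - 1) * dm) (dist p₀ x) ∈ Icc (0:ℝ) (dist p₀ x) := by
    intro k
    exact ⟨le_min (hr k) hD0, min_le_right _ _⟩
  have hDIcc : dist p₀ x ∈ Icc (0:ℝ) (dist p₀ x) := ⟨hD0, le_refl _⟩
  have h0Icc : (0:ℝ) ∈ Icc (0:ℝ) (dist p₀ x) := ⟨le_refl _, hD0⟩
  have hdx : ∀ k : ℕ, dist x (pk k)
      = dist p₀ x - min (((2:ℝ) ^ k - 1) * dm) (dist p₀ x) := by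
    intro k
    have h := hciso _ hDIcc _ (hmIcc k)
    rw [hc1] at h
    rw [hpk k, h, abs_of_nonneg (by linarith [(hmIcc k).2])]
  have hdp : ∀ k : ℕ, dist (pk k) p₀ = min (((2:ℝ) ^ k - 1) * dm) (dist p₀ x) := by
    intro k
    have h := hciso _ (hmIcc k) 0 h0Icc
    rw [hc0] at h
    rw [hpk k, h, sub_zero, abs_of_nonneg (hmIcc k).1]
  have hmem : ∀ k : ℕ, pk k ∈ {y : X | infDist y H ≤ ((2:ℝ) ^ k - 1) * dm} := by
    intro k
    have h1 : infDist (pk k) H ≤ dist (pk k) p₀ := infDist_le_dist_of_mem hp₀.1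
    simp only [mem_setOf_eq]
    calc infDist (pk k) H ≤ dist (pk k) p₀ := h1
      _ = min (((2:ℝ) ^ k - 1) * dm) (dist p₀ x) := hdp k
      _ ≤ _ := min_le_left _ _
  -- key lower bound: any point of V_k is at distance ≥ D - min(r_k, D) from x
  have hlow : ∀ k : ℕ, ∀ y ∈ {y : X | infDist y H ≤ ((2:ℝ) ^ k - 1) * dm},
      dist p₀ x - min (((2:ℝ) ^ k - 1) * dm) (dist p₀ x) ≤ dist x y := by
    intro k y hy
    have hy' : infDist y H ≤ ((2:ℝ) ^ k - 1) * dm := hy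
    have h1 : infDist x H ≤ infDist y H + dist x y := infDist_le_infDist_add_dist
    have h2 : dist p₀ x = infDist x H := (dist_comm p₀ x).trans hp₀.2
    rcases le_total (((2:ℝ) ^ k - 1) * dm) (dist p₀ x) with h | h
    · rw [min_eq_left h]; linarith
    · rw [min_eq_right h]; simpa using dist_nonneg
  have le_inf : ∀ (z : X) (s : Set X) (d : ℝ), s.Nonempty →
      (∀ y ∈ s, d ≤ dist z y) → d ≤ infDist z s := by
    intro z s d hs h
    by_contra hlt
    push_neg at hlt
    obtain ⟨y, hy, hdy⟩ := (infDist_lt_iff hs).1 hlt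
    exact absurd (h y hy) (not_le.2 hdy)
  have hne : ∀ k : ℕ, ({y : X | infDist y H ≤ ((2:ℝ) ^ k - 1) * dm}).Nonempty :=
    fun k => ⟨pk k, hmem k⟩
  constructor
  · intro k
    refine ⟨hmem k, le_antisymm ?_ (infDist_le_dist_of_mem (hmem k))⟩
    refine le_inf _ _ _ (hne k) fun y hy => ?_
    rw [hdx k]
    exact hlow k y hy
  · intro k l hkl
    have hrkl : ((2:ℝ) ^ k - 1) * dm ≤ ((2:ℝ) ^ l - 1) * dm := by
      have : (2:ℝ) ^ k ≤ 2 ^ l := pow_le_pow_right₀ (by norm_num) hkl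
      nlinarith [hdm.le]
    have hmkl : min (((2:ℝ) ^ k - 1) * dm) (dist p₀ x)
        ≤ min (((2:ℝ) ^ l - 1) * dm) (dist p₀ x) := by
      exact min_le_min hrkl (le_refl _)
    have hdlk : dist (pk l) (pk k)
        = min (((2:ℝ) ^ l - 1) * dm) (dist p₀ x)
          - min (((2:ℝ) ^ k - 1) * dm) (dist p₀ x) := by
      rw [hpk l, hpk k, hciso _ (hmIcc l) _ (hmIcc k), abs_of_nonneg (by linarith)]
    refine ⟨hmem k, le_antisymm ?_ (infDist_le_dist_of_mem (hmem k))⟩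
    refine le_inf _ _ _ (hne k) fun y hy => ?_
    have h1 : dist x y ≤ dist x (pk l) + dist (pk l) y := dist_triangle _ _ _
    have h2 := hlow k y hy
    have h3 := hdx l
    rw [hdlk]
    linarith
end
end

section
/- Let X be a δ-hyperbolic geodesic space with δ > 0, and suppose that for every continuous (λ,C)-quasi-isometric map f : [u⁻,u⁺] → X, every z ∈ [u⁻,u⁺], and every geodesic G between f(u⁻) and f(u⁺), one has d(f(z), G) ≤ K₀ + K₁(1 − exp(−K₂(u⁺ − u⁻))) with K₀, K₁ ≥ 0 and K₂ > 0. Then the image of f is contained in the (K₀ + K₁)-neighborhood of G, and G is contained in the (K₀ + K₁ + δ)-neighborhood of the image of f; hence the Hausdorff distance between image(f) and G is at most K₀ + K₁ + δ. -/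
open Metric Set Real

noncomputable section

variable {X : Type*} [MetricSpace X]

theorem hausdorff_distance_from_inductive_estimate {δ lam C K₀ K₁ K₂ : ℝ}
    (hX : GeodesicSpace X) (hδ : IsHyperbolic X δ) (hδ0 : 0 < δ)
    (hK₀ : 0 ≤ K₀) (hK₁ : 0 ≤ K₁) (hK₂ : 0 < K₂)
    (hyp : ∀ u v : ℝ, ∀ g : ℝ → X, u ≤ v →
      QuasiIsometryOn lam C (Icc u v) g → ContinuousOn g (Icc u v) →
      ∀ z ∈ Icc u v, ∀ G : Set X, GeodesicSegmentBetween G (g u) (g v) →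
        infDist (g z) G ≤ K₀ + K₁ * (1 - Real.exp (-K₂ * (v - u))))
    {u v : ℝ} (huv : u ≤ v) {f : ℝ → X}
    (hf : QuasiIsometryOn lam C (Icc u v) f)
    (hcont : ContinuousOn f (Icc u v))
    {G : Set X} (hG : GeodesicSegmentBetween G (f u) (f v)) :
    (∀ z ∈ Icc u v, infDist (f z) G ≤ K₀ + K₁) ∧
    (∀ g ∈ G, infDist g (f '' Icc u v) ≤ K₀ + K₁ + δ) ∧
    hausdorffDist (f '' Icc u v) G ≤ K₀ + K₁ + δ := by
  obtain ⟨γ, hγ0, hγD, hγiso, hγG⟩ := hG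
  set D := dist (f u) (f v) with hD
  have hD0 : 0 ≤ D := dist_nonneg
  have h1 : ∀ z ∈ Icc u v, infDist (f z) G ≤ K₀ + K₁ := by
    intro z hz
    have := hyp u v f huv hf hcont z hz G ⟨γ, hγ0, hγD, hγiso, hγG⟩
    nlinarith [Real.exp_nonneg (-K₂ * (v - u))]
  have hγcont : ContinuousOn γ (Icc 0 D) := by
    have : LipschitzOnWith 1 γ (Icc 0 D) := by
      apply LipschitzOnWith.of_dist_le_mul
      intro x hx y hy
      rw [hγiso x hx y hy, Real.dist_eq]
      simp
    exact this.continuousOn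
  have h2 : ∀ g ∈ G, infDist g (f '' Icc u v) ≤ K₀ + K₁ + δ := by
    intro g hg
    rw [hγG] at hg
    obtain ⟨s, hs, rfl⟩ := hg
    have hsub1 : Icc (0:ℝ) s ⊆ Icc 0 D := Icc_subset_Icc le_rfl hs.2
    have hsub2 : Icc s D ⊆ Icc 0 D := Icc_subset_Icc hs.1 le_rfl
    set H1 : Set X := γ '' Icc 0 s with hH1
    set H2 : Set X := γ '' Icc s D with hH2
    have hc1 : IsCompact H1 := isCompact_Icc.image_of_continuousOn (hγcont.mono hsub1)
    have hc2 : IsCompact H2 := isCompact_Icc.image_of_continuousOn (hγcont.mono hsub2)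
    have hne1 : H1.Nonempty := ⟨γ 0, mem_image_of_mem _ ⟨le_rfl, hs.1⟩⟩
    have hne2 : H2.Nonempty := ⟨γ D, mem_image_of_mem _ ⟨hs.2, le_rfl⟩⟩
    set φ : ℝ → ℝ := fun t => infDist (f t) H1 - infDist (f t) H2 with hφ
    have hφcont : ContinuousOn φ (Icc u v) :=
      ((continuous_infDist_pt H1).comp_continuousOn hcont).sub
        ((continuous_infDist_pt H2).comp_continuousOn hcont)
    have hφu : φ u ≤ 0 := by
      have h0 : infDist (f u) H1 = 0 := by
        apply infDist_zero_of_mem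
        rw [← hγ0]; exact mem_image_of_mem _ ⟨le_rfl, hs.1⟩
      simp only [hφ, h0]
      linarith [infDist_nonneg (x := f u) (s := H2)]
    have hφv : 0 ≤ φ v := by
      have h0 : infDist (f v) H2 = 0 := by
        apply infDist_zero_of_mem
        rw [← hγD]; exact mem_image_of_mem _ ⟨hs.2, le_rfl⟩
      simp only [hφ, h0]
      linarith [infDist_nonneg (x := f v) (s := H1)]
    obtain ⟨t, ht, hφt⟩ := intermediate_value_Icc huv hφcont ⟨hφu, hφv⟩
    -- at t, both infDists are equal
    have heq : infDist (f t) H1 = infDist (f t) H2 := by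
      have : φ t = 0 := hφt
      simp only [hφ] at this; linarith
    -- infDist to G ≤ K
    have hK : infDist (f t) G ≤ K₀ + K₁ := h1 t ht
    have hcG : IsCompact G := by
      rw [hγG]; exact isCompact_Icc.image_of_continuousOn hγcont
    have hneG : G.Nonempty := by
      rw [hγG]; exact ⟨γ 0, mem_image_of_mem _ ⟨le_rfl, hD0⟩⟩
    obtain ⟨q, hqG, hq⟩ := hcG.exists_infDist_eq_dist hneG (f t)
    have hq' : dist (f t) q ≤ K₀ + K₁ := by rw [← hq]; exact hK
    -- q lies in H1 or H2, giving both infDists ≤ K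
    have hboth : infDist (f t) H1 ≤ K₀ + K₁ ∧ infDist (f t) H2 ≤ K₀ + K₁ := by
      rw [hγG] at hqG
      obtain ⟨w, hw, rfl⟩ := hqG
      rcases le_total w s with hws | hws
      · have : infDist (f t) H1 ≤ K₀ + K₁ :=
          le_trans (infDist_le_dist_of_mem (mem_image_of_mem _ ⟨hw.1, hws⟩)) hq'
        exact ⟨this, heq ▸ this⟩
      · have : infDist (f t) H2 ≤ K₀ + K₁ :=
          le_trans (infDist_le_dist_of_mem (mem_image_of_mem _ ⟨hws, hw.2⟩)) hq'
        exact ⟨heq ▸ this, this⟩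
    obtain ⟨a, ha, hpa⟩ := hc1.exists_infDist_eq_dist hne1 (f t)
    obtain ⟨p1, hp1, rfl⟩ := ha
    obtain ⟨b, hb, hpb⟩ := hc2.exists_infDist_eq_dist hne2 (f t)
    obtain ⟨p2, hp2, rfl⟩ := hb
    have ha' : dist (f t) (γ p1) ≤ K₀ + K₁ := by rw [← hpa]; exact hboth.1
    have hb' : dist (f t) (γ p2) ≤ K₀ + K₁ := by rw [← hpb]; exact hboth.2
    -- hyperbolicity gives dist (γ s) (f t) ≤ K + δ
    have hp1D : p1 ∈ Icc (0:ℝ) D := hsub1 hp1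
    have hp2D : p2 ∈ Icc (0:ℝ) D := hsub2 hp2
    have hsD : s ∈ Icc (0:ℝ) D := hs
    have das : dist (γ p1) (γ s) = s - p1 := by
      rw [hγiso p1 hp1D s hsD, abs_of_nonpos (by linarith [hp1.2])]; ring
    have dbs : dist (γ p2) (γ s) = p2 - s := by
      rw [hγiso p2 hp2D s hsD, abs_of_nonneg (by linarith [hp2.1])]
    have dab : dist (γ p1) (γ p2) = p2 - p1 := by
      rw [hγiso p1 hp1D p2 hp2D, abs_of_nonpos (by linarith [hp1.2, hp2.1])]; ring
    have hhyp := hδ (γ p1) (f t) (γ p2) (γ s)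
    have hzero : gromovProd (γ p1) (γ p2) (γ s) = 0 := by
      simp only [gromovProd, das, dbs, dab]; ring
    have tri1 : dist (f t) (γ s) ≤ dist (f t) (γ p1) + dist (γ p1) (γ s) :=
      dist_triangle _ _ _
    have tri2 : dist (f t) (γ s) ≤ dist (f t) (γ p2) + dist (γ p2) (γ s) :=
      dist_triangle _ _ _
    have lb1 : dist (f t) (γ s) - (K₀ + K₁) ≤ gromovProd (γ p1) (f t) (γ s) := by
      simp only [gromovProd]
      rw [dist_comm (γ p1) (f t)]
      linarith
    have lb2 : dist (f t) (γ s) - (K₀ + K₁) ≤ gromovProd (f t) (γ p2) (γ s) := by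
      simp only [gromovProd]
      linarith [dist_comm (f t) (γ s), dist_comm (f t) (γ p2)]
    have hmin := le_min lb1 lb2
    rw [hzero] at hhyp
    have hdist : dist (γ s) (f t) ≤ K₀ + K₁ + δ := by
      rw [dist_comm]; linarith
    exact le_trans (infDist_le_dist_of_mem (mem_image_of_mem f ht)) hdist
  refine ⟨h1, h2, ?_⟩
  apply hausdorffDist_le_of_infDist (by linarith)
  · rintro x ⟨z, hz, rfl⟩
    linarith [h1 z hz]
  · exact h2
end
end
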